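/- arXiv:2506.15116 — 4 statements merged into one kernel-verified Lean document; each statement's English description precedes it below -/
import Mathlib

section
/- (Maslov's transformation produces the reversal mapping.) For every integer n ≥ 2, let σ_k denote the product of the adjacent transpositions (j, j+1) for j ∈ N_k (these pairwise commute, so the product is well defined). Then the composition σ_{2n−4} ∘ σ_{2n−5} ∘ ⋯ ∘ σ_1 ∘ σ_0, applied to the identity mapping, yields the reversal permutation of {0, …, n−1}; that is, τ_{2n−3} := σ_{2n−4} ∘ ⋯ ∘ σ_0 satisfies τ_{2n−3}(i) = n−1−i for every 0 ≤ i ≤ n−1. -/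
/-- For an integer `n ≥ 2` and `0 ≤ k ≤ 2n-4`, the set `N_k`:
for `0 ≤ k ≤ n-2`, `N_k = {j : 0 ≤ j ≤ k, j ≡ k (mod 2)}`;
for `n-1 ≤ k ≤ 2n-4`, `N_k = N_{2n-4-k}`. -/
def Nset (n k : ℕ) : Finset ℕ :=
  if k ≤ n - 2 then
    (Finset.range (k + 1)).filter (fun j => j % 2 = k % 2)
  else
    (Finset.range ((2 * n - 4 - k) + 1)).filter (fun j => j % 2 = (2 * n - 4 - k) % 2)

/-- `σ_k`: the product of the adjacent transpositions `(j, j+1)` for `j ∈ N_k`.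
Distinct elements of `N_k` differ by at least 2, so these transpositions pairwise
commute and the product does not depend on the order; here we take the elements of
`N_k` in increasing order. -/
def sigmaPerm (n k : ℕ) : Equiv.Perm ℕ :=
  (((Nset n k).sort (· ≤ ·)).map (fun j => Equiv.swap j (j + 1))).prod

/-- Product of swaps at positions `r, r+2, …, r+2(c-1)`. -/
lemma swapProd_apply (c r v : ℕ) :
    (((List.range c).map (fun i => Equiv.swap (r + 2*i) (r + 2*i + 1))).prod : Equiv.Perm ℕ) v =
      if v < r then v else if r + 2*c ≤ v then v
      else if (v - r) % 2 = 0 then v + 1 else v - 1 := by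
  induction c generalizing v with
  | zero =>
      simp only [List.range_zero, List.map_nil, List.prod_nil, Equiv.Perm.coe_one, id_eq]
      split_ifs <;> omega
  | succ c ih =>
      rw [List.range_succ, List.map_append, List.prod_append]
      simp only [List.map_cons, List.map_nil, List.prod_cons, List.prod_nil, mul_one,
        Equiv.Perm.mul_apply]
      rcases eq_or_ne v (r + 2*c) with h | h
      · subst h
        rw [Equiv.swap_apply_left, ih]
        split_ifs <;> omega
      rcases eq_or_ne v (r + 2*c + 1) with h2 | h2
      · subst h2
        rw [Equiv.swap_apply_right, ih]
        split_ifs <;> omega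
      · rw [Equiv.swap_apply_of_ne_of_ne h h2, ih]
        split_ifs <;> omega

lemma sort_filter_parity (t : ℕ) :
    ((Finset.range (t+1)).filter (fun j => j % 2 = t % 2)).sort (· ≤ ·) =
      (List.range (t/2 + 1)).map (fun i => t % 2 + 2*i) := by
  have hset : (Finset.range (t+1)).filter (fun j => j % 2 = t % 2) =
      ((List.range (t/2 + 1)).map (fun i => t % 2 + 2*i)).toFinset := by
    ext j
    simp only [Finset.mem_filter, Finset.mem_range, List.mem_toFinset, List.mem_map,
      List.mem_range]
    constructor
    · rintro ⟨h1, h2⟩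
      exact ⟨(j - t % 2) / 2, by omega, by omega⟩
    · rintro ⟨i, hi, rfl⟩
      omega
  rw [hset]
  rw [List.toFinset_sort]
  · exact List.Pairwise.map _ (fun a b hab => by omega) List.pairwise_lt_range
  · apply List.Nodup.map ?_ List.nodup_range
    intro a b hab
    simp only at hab
    omega

lemma sigma_apply (n k t v : ℕ)
    (ht : Nset n k = (Finset.range (t+1)).filter (fun j => j % 2 = t % 2)) :
    sigmaPerm n k v =
      if v < t % 2 then v else if t + 2 ≤ v then v
      else if (v - t % 2) % 2 = 0 then v + 1 else v - 1 := by
  rw [sigmaPerm, ht, sort_filter_parity, List.map_map]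
  have h := swapProd_apply (t/2+1) (t%2) v
  have h2 : t % 2 + 2 * (t / 2 + 1) = t + 2 := by omega
  rw [h2] at h
  rw [← h]
  rfl

/-- The closed form for the partial products. -/
def tauFun (n m i : ℕ) : ℕ :=
  if i < m - (n-1) then n - 1 - i
  else if 2*i ≤ m then m - 2*i
  else if i ≤ m ∧ i ≤ n - 1 then 2*i - m - 1
  else i

set_option maxHeartbeats 2000000 in
lemma tau_formula (n : ℕ) (hn : 2 ≤ n) :
    ∀ m, m ≤ 2*n-3 → ∀ i,
      (((List.range m).reverse.map (sigmaPerm n)).prod : Equiv.Perm ℕ) i = tauFun n m i := by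
  intro m
  induction m with
  | zero =>
      intro _ i
      simp only [List.range_zero, List.reverse_nil, List.map_nil, List.prod_nil,
        Equiv.Perm.coe_one, id_eq, tauFun]
      split_ifs <;> omega
  | succ m ih =>
      intro hm i
      rw [List.range_succ]
      simp only [List.reverse_append, List.reverse_singleton, List.singleton_append,
        List.map_cons, List.prod_cons, Equiv.Perm.mul_apply]
      rw [ih (by omega) i]
      by_cases hcase : m ≤ n - 2
      · have ht : Nset n m = (Finset.range (m+1)).filter (fun j => j % 2 = m % 2) := by
          rw [Nset, if_pos hcase]
        rw [sigma_apply n m m _ ht]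
        simp only [tauFun]
        split_ifs <;> omega
      · set t := 2*n-4-m with htdef
        have ht : Nset n m = (Finset.range (t+1)).filter (fun j => j % 2 = t % 2) := by
          rw [Nset, if_neg hcase]
        rw [sigma_apply n m t _ ht]
        simp only [tauFun]
        split_ifs <;> omega

/-- Maslov's transformation produces the reversal mapping: the composition
`σ_{2n-4} ∘ σ_{2n-5} ∘ ⋯ ∘ σ_1 ∘ σ_0`, applied to the identity mapping,
yields the reversal permutation of `{0, …, n-1}`:
`τ_{2n-3}(i) = n - 1 - i` for all `0 ≤ i ≤ n-1`. -/
theorem stmt4 (n : ℕ) (hn : 2 ≤ n) :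
    ∀ i < n,
      (((List.range (2 * n - 3)).reverse.map (sigmaPerm n)).prod : Equiv.Perm ℕ) i
        = n - 1 - i := by
  intro i hi
  rw [tau_formula n hn (2*n-3) le_rfl i]
  simp only [tauFun]
  split_ifs <;> omega
end

section
/- (Every pair of logical qubits interacts exactly once in Maslov's transformation.) For an integer n ≥ 2, define permutations τ_k of {0, …, n−1} by τ_0 = identity and τ_{k+1} = σ_k ∘ τ_k, where σ_k is the product of the commuting adjacent transpositions (j, j+1) for j ∈ N_k. For each 0 ≤ k ≤ 2n−4 and each j ∈ N_k, let P(k, j) denote the unordered pair {τ_k^{-1}(j), τ_k^{-1}(j+1)}. Then the assignment (k, j) ↦ P(k, j) is injective, and its range is exactly the set of all unordered pairs of distinct elements of {0, …, n−1}; that is, each of the n(n−1)/2 unordered pairs occurs as P(k, j) for exactly one pair (k, j) with j ∈ N_k. -/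
/-- `τ_0 = id` and `τ_{k+1} = σ_k ∘ τ_k`. -/
def tauPerm (n : ℕ) : ℕ → Equiv.Perm ℕ
  | 0 => 1
  | k + 1 => sigmaPerm n k * tauPerm n k

/-- `P(k, j)`: the unordered pair `{τ_k⁻¹(j), τ_k⁻¹(j+1)}`. -/
def Ppair (n k j : ℕ) : Sym2 ℕ :=
  s((tauPerm n k)⁻¹ j, (tauPerm n k)⁻¹ (j + 1))

section Aux

/-- Evaluation of a product of adjacent swaps at a point not touched by any swap. -/
lemma swapProd_fixed (L : List ℕ) {x : ℕ} (hx : ∀ j ∈ L, x ≠ j ∧ x ≠ j + 1) :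
    (L.map (fun j => Equiv.swap j (j + 1))).prod x = x := by
  induction L with
  | nil => simp
  | cons a t ih =>
      simp only [List.map_cons, List.prod_cons, Equiv.Perm.mul_apply]
      rw [ih (fun j hj => hx j (List.mem_cons_of_mem a hj))]
      exact Equiv.swap_apply_of_ne_of_ne (hx a List.mem_cons_self).1
        (hx a List.mem_cons_self).2

lemma swapProd_mem (L : List ℕ) (h : L.Pairwise (fun a b => a + 2 ≤ b)) {x : ℕ}
    (hx : x ∈ L) :
    (L.map (fun j => Equiv.swap j (j + 1))).prod x = x + 1 := by
  induction L with
  | nil => simp at hx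
  | cons a t ih =>
      simp only [List.map_cons, List.prod_cons, Equiv.Perm.mul_apply]
      rcases List.mem_cons.1 hx with rfl | hx'
      · rw [swapProd_fixed t (fun j hj => by
          have := (List.pairwise_cons.1 h).1 j hj; omega)]
        exact Equiv.swap_apply_left x (x + 1)
      · rw [ih (List.pairwise_cons.1 h).2 hx']
        have := (List.pairwise_cons.1 h).1 x hx'
        exact Equiv.swap_apply_of_ne_of_ne (by omega) (by omega)

lemma swapProd_mem_succ (L : List ℕ) (h : L.Pairwise (fun a b => a + 2 ≤ b)) {x : ℕ}
    (hx : x ∈ L) :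
    (L.map (fun j => Equiv.swap j (j + 1))).prod (x + 1) = x := by
  induction L with
  | nil => simp at hx
  | cons a t ih =>
      simp only [List.map_cons, List.prod_cons, Equiv.Perm.mul_apply]
      rcases List.mem_cons.1 hx with rfl | hx'
      · rw [swapProd_fixed t (fun j hj => by
          have := (List.pairwise_cons.1 h).1 j hj; omega)]
        exact Equiv.swap_apply_right x (x + 1)
      · rw [ih (List.pairwise_cons.1 h).2 hx']
        have := (List.pairwise_cons.1 h).1 x hx'
        exact Equiv.swap_apply_of_ne_of_ne (by omega) (by omega)

lemma mem_Nset_parity {n k j : ℕ} (hj : j ∈ Nset n k) :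
    j % 2 = (if k ≤ n - 2 then k else 2 * n - 4 - k) % 2 := by
  unfold Nset at hj
  split_ifs at hj ⊢ with h <;> simp only [Finset.mem_filter] at hj <;> simp [hj.2]

lemma nset_sort_pairwise (n k : ℕ) :
    ((Nset n k).sort (· ≤ ·)).Pairwise (fun a b => a + 2 ≤ b) := by
  refine List.Pairwise.imp_of_mem (fun {a b} ha hb hab => ?_) ((Nset n k).sortedLT_sort.pairwise)
  have ha' := mem_Nset_parity ((Finset.mem_sort _).1 ha)
  have hb' := mem_Nset_parity ((Finset.mem_sort _).1 hb)
  omega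

lemma sigma_apply_mem {n k j : ℕ} (hj : j ∈ Nset n k) : sigmaPerm n k j = j + 1 :=
  swapProd_mem _ (nset_sort_pairwise n k) ((Finset.mem_sort _).2 hj)

lemma sigma_apply_mem_succ {n k j : ℕ} (hj : j ∈ Nset n k) : sigmaPerm n k (j + 1) = j :=
  swapProd_mem_succ _ (nset_sort_pairwise n k) ((Finset.mem_sort _).2 hj)

lemma sigma_apply_fixed {n k j : ℕ} (h1 : j ∉ Nset n k)
    (h2 : j = 0 ∨ j - 1 ∉ Nset n k) : sigmaPerm n k j = j := by
  refine swapProd_fixed _ (fun a ha => ?_)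
  have ha' := (Finset.mem_sort _).1 ha
  constructor
  · rintro rfl; exact h1 ha'
  · rintro rfl
    rcases h2 with h | h
    · omega
    · simp at h; exact h ha'

lemma mem_Nset_iff {n k j : ℕ} (hn : 2 ≤ n) (hk : k ≤ 2 * n - 4) :
    j ∈ Nset n k ↔ j ≤ k ∧ k + j ≤ 2 * n - 4 ∧ j % 2 = k % 2 := by
  unfold Nset
  split_ifs with h <;> simp only [Finset.mem_filter, Finset.mem_range] <;> omega

/-- Explicit formula for `(tauPerm n k)⁻¹`. -/
def finv (n k j : ℕ) : ℕ :=
  if n ≤ j then j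
  else if k < j then j
  else if 2 * n - 2 ≤ k + j then n - 1 - j
  else if (k + j) % 2 = 0 then (k - j) / 2 else (k + j + 1) / 2

set_option maxHeartbeats 1000000 in
lemma tauInv (n : ℕ) (hn : 2 ≤ n) :
    ∀ k, k ≤ 2 * n - 3 → ∀ j, (tauPerm n k)⁻¹ j = finv n k j := by
  intro k
  induction k with
  | zero =>
      intro _ j
      show (1 : Equiv.Perm ℕ)⁻¹ j = finv n 0 j
      unfold finv
      simp only [inv_one, Equiv.Perm.one_apply]
      split_ifs <;> omega
  | succ k ih =>
      intro hk j
      have hk' : k ≤ 2 * n - 4 := by omega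
      show (sigmaPerm n k * tauPerm n k)⁻¹ j = finv n (k + 1) j
      rw [mul_inv_rev, Equiv.Perm.mul_apply]
      by_cases h1 : j ∈ Nset n k
      · have hσ : (sigmaPerm n k)⁻¹ j = j + 1 :=
          Equiv.Perm.inv_eq_iff_eq.2 (sigma_apply_mem_succ h1).symm
        rw [hσ, ih (by omega) (j + 1)]
        have hm := (mem_Nset_iff hn hk').1 h1
        unfold finv; split_ifs <;> omega
      · by_cases h2 : 1 ≤ j ∧ j - 1 ∈ Nset n k
        · have hσ : (sigmaPerm n k)⁻¹ j = j - 1 := by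
            have := sigma_apply_mem h2.2
            rw [show j - 1 + 1 = j by omega] at this
            exact Equiv.Perm.inv_eq_iff_eq.2 this.symm
          rw [hσ, ih (by omega) (j - 1)]
          have hm := (mem_Nset_iff hn hk').1 h2.2
          have hnm : ¬(j ≤ k ∧ k + j ≤ 2 * n - 4 ∧ j % 2 = k % 2) :=
            fun h => h1 ((mem_Nset_iff hn hk').2 h)
          unfold finv; split_ifs <;> omega
        · have h2' : j = 0 ∨ j - 1 ∉ Nset n k := by
            rcases Nat.eq_zero_or_pos j with h | h
            · exact Or.inl h
            · exact Or.inr (fun hm => h2 ⟨h, hm⟩)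
          have hσ : (sigmaPerm n k)⁻¹ j = j :=
            Equiv.Perm.inv_eq_iff_eq.2 (sigma_apply_fixed h1 h2').symm
          rw [hσ, ih (by omega) j]
          have hnm : ¬(j ≤ k ∧ k + j ≤ 2 * n - 4 ∧ j % 2 = k % 2) :=
            fun h => h1 ((mem_Nset_iff hn hk').2 h)
          have hnm' : j = 0 ∨ ¬(j - 1 ≤ k ∧ k + (j - 1) ≤ 2 * n - 4 ∧ (j - 1) % 2 = k % 2) := by
            rcases Nat.eq_zero_or_pos j with h | h
            · exact Or.inl h
            · exact Or.inr (fun hm => h2 ⟨h, (mem_Nset_iff hn hk').2 hm⟩)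
          unfold finv; split_ifs <;> omega

lemma ppair_eq {n k j : ℕ} (hn : 2 ≤ n) (hk : k ≤ 2 * n - 4) (hj : j ∈ Nset n k) :
    Ppair n k j = s((k - j) / 2, (k + j) / 2 + 1) := by
  have hm := (mem_Nset_iff hn hk).1 hj
  unfold Ppair
  rw [tauInv n hn k (by omega) j, tauInv n hn k (by omega) (j + 1)]
  have e1 : finv n k j = (k - j) / 2 := by unfold finv; split_ifs <;> omega
  have e2 : finv n k (j + 1) = (k + j) / 2 + 1 := by unfold finv; split_ifs <;> omega
  rw [e1, e2]

end Aux

/-- Every pair of logical qubits interacts exactly once in Maslov's transformation: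
the assignment `(k, j) ↦ P(k, j)`, for `0 ≤ k ≤ 2n-4` and `j ∈ N_k`, is injective
and its range is exactly the set of all unordered pairs of distinct elements of
`{0, …, n-1}`. -/


theorem stmt5 (n : ℕ) (hn : 2 ≤ n) :
    Set.InjOn (fun p : ℕ × ℕ => Ppair n p.1 p.2)
      {p : ℕ × ℕ | p.1 ≤ 2 * n - 4 ∧ p.2 ∈ Nset n p.1} ∧
    (fun p : ℕ × ℕ => Ppair n p.1 p.2) ''
        {p : ℕ × ℕ | p.1 ≤ 2 * n - 4 ∧ p.2 ∈ Nset n p.1}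
      = {z : Sym2 ℕ | ¬ z.IsDiag ∧ ∀ a ∈ z, a < n} := by
  constructor
  · rintro ⟨k1, j1⟩ ⟨hk1, hj1⟩ ⟨k2, j2⟩ ⟨hk2, hj2⟩ h
    simp only at h
    rw [ppair_eq hn hk1 hj1, ppair_eq hn hk2 hj2] at h
    rw [Sym2.eq_iff] at h
    have hm1 := (mem_Nset_iff hn hk1).1 hj1
    have hm2 := (mem_Nset_iff hn hk2).1 hj2
    have : k1 = k2 ∧ j1 = j2 := by rcases h with ⟨h1, h2⟩ | ⟨h1, h2⟩ <;> omega
    simp [Prod.ext_iff, this.1, this.2]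
  · ext z
    simp only [Set.mem_image, Set.mem_setOf_eq]
    constructor
    · rintro ⟨⟨k, j⟩, ⟨hk, hj⟩, rfl⟩
      simp only
      rw [ppair_eq hn hk hj]
      have hm := (mem_Nset_iff hn hk).1 hj
      constructor
      · rw [Sym2.mk_isDiag_iff]; omega
      · intro a ha
        rw [Sym2.mem_iff] at ha
        rcases ha with rfl | rfl <;> omega
    · intro hz
      induction z using Sym2.ind with
      | _ x y =>
        obtain ⟨hd, hb⟩ := hz
        rw [Sym2.mk_isDiag_iff] at hd
        have hx : x < n := hb x (Sym2.mem_mk_left x y)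
        have hy : y < n := hb y (Sym2.mem_mk_right x y)
        have key : ∀ a b : ℕ, a < b → b < n → ∃ p : ℕ × ℕ,
            (p.1 ≤ 2 * n - 4 ∧ p.2 ∈ Nset n p.1) ∧ Ppair n p.1 p.2 = s(a, b) := by
          intro a b hab hbn
          have hk : a + b - 1 ≤ 2 * n - 4 := by omega
          have hj : b - a - 1 ∈ Nset n (a + b - 1) :=
            (mem_Nset_iff hn hk).2 (by omega)
          refine ⟨(a + b - 1, b - a - 1), ⟨hk, hj⟩, ?_⟩
          rw [ppair_eq hn hk hj,
            show (a + b - 1 - (b - a - 1)) / 2 = a from by omega,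
            show (a + b - 1 + (b - a - 1)) / 2 + 1 = b from by omega]
        rcases Nat.lt_or_ge x y with hlt | hge
        · exact key x y hlt hy
        · have hlt : y < x := by omega
          obtain ⟨p, hp, hpe⟩ := key y x hlt hx
          exact ⟨p, hp, by rw [hpe, Sym2.eq_swap]⟩
end

section
/- (Existence of long zigzag paths in square grids.) For every positive integer w, there exists an injective map f from {0, 1, …, 4w² − 2w + 1} into the grid {0, …, 2w−1} × {0, …, 2w−1} such that for every i, f(i+1) and f(i) differ by exactly 1 in exactly one coordinate, and consecutive steps alternate between changing the x-coordinate and changing the y-coordinate. In other words, a zigzag folding of 4w² − 2w + 2 points into a (2w × 2w)-grid exists, wasting at most 2w − 2 grid points. -/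
def ZN (w : ℕ) : ℕ := 4 * w ^ 2 - 2 * w + 2

def Fx (w i : ℕ) : ℕ :=
  if i < 4*w-1 then ((i+1)/2) % 2
  else if i < 8*w-6 then 2 + (i-(4*w-1))/2
  else if i < 12*w-12 then 2*w-2 + (1 - ((i-(8*w-6)+1)/2) % 2)
  else 2*w-2 - (i-(12*w-12)+1)/2

def Fy (w i : ℕ) : ℕ :=
  if i < 4*w-1 then i/2
  else if i < 8*w-6 then 2*w-1 - ((i-(4*w-1)+1)/2) % 2
  else if i < 12*w-12 then 2*w-3 - (i-(8*w-6))/2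
  else ((i-(12*w-12))/2) % 2

def gp : ℕ → ℕ → ℕ × ℕ
  | 0, _ => (0, 0)
  | 1, i => if i = 0 then (0,0) else if i = 1 then (1,0) else if i = 2 then (1,1) else (0,1)
  | 2, i =>
      if i = 0 then (0,0) else if i = 1 then (1,0) else if i = 2 then (1,1) else
      if i = 3 then (0,1) else if i = 4 then (0,2) else if i = 5 then (1,2) else
      if i = 6 then (1,3) else if i = 7 then (2,3) else if i = 8 then (2,2) else
      if i = 9 then (3,2) else if i = 10 then (3,1) else if i = 11 then (2,1) else
      if i = 12 then (2,0) else (3,0)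
  | (m+3), i =>
      if i < 16*(m+3)-20 then (Fx (m+3) i, Fy (m+3) i)
      else ((gp (m+1) (i - (16*(m+3)-20))).1 + 2, (gp (m+1) (i - (16*(m+3)-20))).2 + 2)

def ZStep (a b : ℕ × ℕ) : Prop :=
  (a.1 = b.1 ∧ (a.2 = b.2 + 1 ∨ b.2 = a.2 + 1)) ∨
  (a.2 = b.2 ∧ (a.1 = b.1 + 1 ∨ b.1 = a.1 + 1))

instance : ∀ a b, Decidable (ZStep a b) := fun _ _ => by unfold ZStep; infer_instance

def ZP (w : ℕ) : Prop :=
  gp w 0 = (0,0) ∧ gp w 1 = (1,0) ∧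
  (∀ i < ZN w, ∀ j < ZN w, gp w i = gp w j → i = j) ∧
  (∀ i < ZN w, (gp w i).1 < 2*w ∧ (gp w i).2 < 2*w) ∧
  (∀ i < ZN w, 0 < i → ZStep (gp w (i-1)) (gp w i)) ∧
  (∀ i < ZN w, 0 < i → ((gp w i).2 = (gp w (i-1)).2 ↔ (i-1) % 2 = 0))

example : ZP 1 := by unfold ZP ZN; decide
example : ZP 2 := by unfold ZP ZN; decide

lemma gp_succ3 (m i : ℕ) : gp (m+3) i =
    if i < 16*(m+3)-20 then (Fx (m+3) i, Fy (m+3) i)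
    else ((gp (m+1) (i - (16*(m+3)-20))).1 + 2, (gp (m+1) (i - (16*(m+3)-20))).2 + 2) := by
  rfl

lemma ZN_eq (w : ℕ) : ZN (w+3) = ZN (w+1) + (16*w + 28) := by
  unfold ZN
  have h1 : 2*(w+3) ≤ 4*(w+3)^2 := by nlinarith
  have h2 : 2*(w+1) ≤ 4*(w+1)^2 := by nlinarith
  zify [h1, h2]
  ring

lemma ZStep_mk (a b c d : ℕ) : ZStep (a,b) (c,d) ↔
    ((a = c ∧ (b = d+1 ∨ d = b+1)) ∨ (b = d ∧ (a = c+1 ∨ c = a+1))) := Iff.rfl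

set_option maxHeartbeats 1000000 in
lemma frame_step (w : ℕ) : ∀ i, 0 < i → i < 16*w+28 →
    ZStep (Fx (w+3) (i-1), Fy (w+3) (i-1)) (Fx (w+3) i, Fy (w+3) i) := by
  intro i h1 h2
  rw [ZStep_mk]
  unfold Fx Fy
  split_ifs <;> omega

set_option maxHeartbeats 1000000 in
lemma frame_dir (w : ℕ) : ∀ i, 0 < i → i < 16*w+28 →
    (Fy (w+3) i = Fy (w+3) (i-1) ↔ (i-1) % 2 = 0) := by
  intro i h1 h2
  unfold Fy
  split_ifs <;> omega

set_option maxHeartbeats 1000000 in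
lemma frame_inj (w : ℕ) : ∀ i < 16*w+28, ∀ j < 16*w+28,
    Fx (w+3) i = Fx (w+3) j → Fy (w+3) i = Fy (w+3) j → i = j := by
  intro i hi j hj hx hy
  unfold Fx at hx
  unfold Fy at hy
  split_ifs at hx hy <;> omega

set_option maxHeartbeats 1000000 in
lemma zstep (w : ℕ) (ih : ZP (w+1)) : ZP (w+3) := by
  obtain ⟨ih0, ih1, ihinj, ihbd, ihstep, ihdir⟩ := ih
  have hL : 16*(w+3)-20 = 16*w+28 := by omega
  have hgp : ∀ i, gp (w+3) i =
      if i < 16*w+28 then (Fx (w+3) i, Fy (w+3) i)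
      else ((gp (w+1) (i - (16*w+28))).1 + 2, (gp (w+1) (i - (16*w+28))).2 + 2) := by
    intro i; rw [gp_succ3, hL]
  have hZN : ZN (w+3) = ZN (w+1) + (16*w + 28) := ZN_eq w
  have hbdF : ∀ i < 16*w+28, Fx (w+3) i < 2*(w+3) ∧ Fy (w+3) i < 2*(w+3) := by
    intro i hi; unfold Fx Fy; split_ifs <;> omega
  have hregF : ∀ i < 16*w+28,
      Fx (w+3) i ≤ 1 ∨ 2*w+4 ≤ Fx (w+3) i ∨ Fy (w+3) i ≤ 1 ∨ 2*w+4 ≤ Fy (w+3) i := by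
    intro i hi; unfold Fx Fy; split_ifs <;> omega
  have hend : Fx (w+3) (16*w+28-1) = 2 ∧ Fy (w+3) (16*w+28-1) = 1 := by
    unfold Fx Fy; split_ifs <;> omega
  refine ⟨?_, ?_, ?_, ?_, ?_, ?_⟩
  · rw [hgp, if_pos (by omega)]
    unfold Fx Fy
    rw [if_pos (by omega), if_pos (by omega)]
  · rw [hgp, if_pos (by omega)]
    unfold Fx Fy
    rw [if_pos (by omega), if_pos (by omega)]
  · -- injectivity
    intro i hi j hj heq
    rw [hgp i, hgp j, Prod.ext_iff] at heq
    by_cases ci : i < 16*w+28 <;> by_cases cj : j < 16*w+28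
    · rw [if_pos ci, if_pos cj] at heq
      dsimp only at heq
      exact frame_inj w i ci j cj heq.1 heq.2
    · rw [if_pos ci, if_neg cj] at heq
      dsimp only at heq
      have h1 := hregF i ci
      have h2 := ihbd (j - (16*w+28)) (by omega)
      omega
    · rw [if_neg ci, if_pos cj] at heq
      dsimp only at heq
      have h1 := hregF j cj
      have h2 := ihbd (i - (16*w+28)) (by omega)
      omega
    · rw [if_neg ci, if_neg cj] at heq
      dsimp only at heq
      have := ihinj (i - (16*w+28)) (by omega) (j - (16*w+28)) (by omega)
        (by rw [Prod.ext_iff]; constructor <;> omega)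
      omega
  · -- bounds
    intro i hi
    rw [hgp]
    by_cases ci : i < 16*w+28
    · rw [if_pos ci]; exact hbdF i ci
    · rw [if_neg ci]
      have := ihbd (i - (16*w+28)) (by omega)
      dsimp only
      omega
  · -- steps
    intro i hi hpos
    rw [hgp i, hgp (i-1)]
    by_cases ci : i < 16*w+28
    · rw [if_pos ci, if_pos (by omega)]
      exact frame_step w i hpos ci
    · by_cases ci' : i = 16*w+28
      · subst ci'
        rw [if_pos (show 16*w+28-1 < 16*w+28 by omega),
            if_neg (show ¬(16*w+28 < 16*w+28) by omega)]
        have h0 : (16*w+28) - (16*w+28) = 0 := by omega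
        rw [h0, ih0, hend.1, hend.2]
        exact Or.inl ⟨rfl, Or.inr rfl⟩
      · rw [if_neg (by omega), if_neg (by omega)]
        have hs := ihstep (i - (16*w+28)) (by omega) (by omega)
        have hidx : i - 1 - (16*w+28) = i - (16*w+28) - 1 := by omega
        rw [hidx]
        unfold ZStep at hs ⊢
        dsimp only at hs ⊢
        omega
  · -- direction parity
    intro i hi hpos
    rw [hgp i, hgp (i-1)]
    by_cases ci : i < 16*w+28
    · rw [if_pos ci, if_pos (by omega)]
      dsimp only
      exact frame_dir w i hpos ci
    · by_cases ci' : i = 16*w+28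
      · subst ci'
        rw [if_pos (show 16*w+28-1 < 16*w+28 by omega),
            if_neg (show ¬(16*w+28 < 16*w+28) by omega)]
        have h0 : (16*w+28) - (16*w+28) = 0 := by omega
        rw [h0, ih0, hend.2]
        dsimp only
        omega
      · rw [if_neg (by omega), if_neg (by omega)]
        have hd := ihdir (i - (16*w+28)) (by omega) (by omega)
        have hidx : i - 1 - (16*w+28) = i - (16*w+28) - 1 := by omega
        rw [hidx]
        dsimp only
        omega

lemma zbase1 : ZP 1 := by unfold ZP ZN; decide
lemma zbase2 : ZP 2 := by unfold ZP ZN; decide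

lemma zmain : ∀ w, ZP (w+1) := by
  intro w
  induction w using Nat.strong_induction_on with
  | _ w ih =>
    match w with
    | 0 => exact zbase1
    | 1 => exact zbase2
    | (m+2) => exact zstep m (ih m (by omega))

lemma zz_abs_one {a b : ℕ} (h : a = b + 1 ∨ b = a + 1) : |(b:ℤ) - (a:ℤ)| = 1 := by
  rcases h with h | h <;> subst h <;> push_cast <;> simp [abs_sub_comm]

/-- Existence of long zigzag paths in square grids: for every positive integer
`w`, there is a zigzag folding of `4w² - 2w + 2` points into the
`(2w × 2w)`-grid, i.e. an injective map `f` on `{0, …, 4w² - 2w + 1}` into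
`{0, …, 2w-1} × {0, …, 2w-1}` such that consecutive images are at L1 distance 1
(each step changes exactly one coordinate by exactly 1) and consecutive steps
alternate between changing the x-coordinate and changing the y-coordinate. -/
theorem stmt13 (w : ℕ) (hw : 0 < w) :
    ∃ f : ℕ → ℤ × ℤ,
      Set.InjOn f (Set.Iio (4 * w ^ 2 - 2 * w + 2)) ∧
      (∀ i < 4 * w ^ 2 - 2 * w + 2,
        0 ≤ (f i).1 ∧ (f i).1 < 2 * w ∧ 0 ≤ (f i).2 ∧ (f i).2 < 2 * w) ∧
      (∀ i, i + 1 < 4 * w ^ 2 - 2 * w + 2 →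
        |(f (i + 1)).1 - (f i).1| + |(f (i + 1)).2 - (f i).2| = 1) ∧
      (∀ i, 0 < i → i + 1 < 4 * w ^ 2 - 2 * w + 2 →
        (((f i).1 ≠ (f (i - 1)).1 → (f (i + 1)).1 = (f i).1) ∧
         ((f i).2 ≠ (f (i - 1)).2 → (f (i + 1)).2 = (f i).2))) := by
  obtain ⟨-, -, hinj, hbd, hstep, hdir⟩ : ZP w := by
    obtain ⟨m, rfl⟩ : ∃ m, w = m + 1 := ⟨w - 1, by omega⟩
    exact zmain m
  have hN : 4 * w ^ 2 - 2 * w + 2 = ZN w := rfl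
  refine ⟨fun i => (((gp w i).1 : ℤ), ((gp w i).2 : ℤ)), ?_, ?_, ?_, ?_⟩
  · intro i hi j hj heq
    simp only [Set.mem_Iio, hN] at hi hj
    dsimp only at heq
    rw [Prod.ext_iff] at heq
    dsimp only at heq
    obtain ⟨h1, h2⟩ := heq
    exact hinj i hi j hj (Prod.ext_iff.2 ⟨by exact_mod_cast h1, by exact_mod_cast h2⟩)
  · intro i hi
    rw [hN] at hi
    have h := hbd i hi
    dsimp only
    refine ⟨by positivity, ?_, by positivity, ?_⟩
    · exact_mod_cast h.1
    · exact_mod_cast h.2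
  · intro i hi
    rw [hN] at hi
    have hs := hstep (i+1) hi (by omega)
    simp only [Nat.add_sub_cancel] at hs
    dsimp only
    rcases hs with ⟨h1, h2⟩ | ⟨h1, h2⟩
    · rw [show ((gp w (i+1)).1 : ℤ) = ((gp w i).1 : ℤ) by rw [h1]]
      simp only [sub_self, abs_zero, zero_add]
      exact zz_abs_one h2
    · rw [show ((gp w (i+1)).2 : ℤ) = ((gp w i).2 : ℤ) by rw [h1]]
      simp only [sub_self, abs_zero, add_zero]
      exact zz_abs_one h2
  · intro i hpos hi
    rw [hN] at hi
    have hs1 := hstep i (by omega) hpos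
    have hs2 := hstep (i+1) hi (by omega)
    simp only [Nat.add_sub_cancel] at hs2
    have hd1 := hdir i (by omega) hpos
    have hd2 := hdir (i+1) hi (by omega)
    simp only [Nat.add_sub_cancel] at hd2
    dsimp only
    constructor
    · intro hne
      have hne' : (gp w i).1 ≠ (gp w (i-1)).1 := by
        intro h; exact hne (by rw [h])
      rcases hs1 with ⟨h1, -⟩ | ⟨h1, -⟩
      · exact absurd h1.symm hne'
      · have hp : (i-1) % 2 = 0 := hd1.1 h1.symm
        have hip : ¬ (i % 2 = 0) := by omega
        have hy2 : (gp w (i+1)).2 ≠ (gp w i).2 := fun h => hip (hd2.1 h)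
        rcases hs2 with ⟨h2, -⟩ | ⟨h2, -⟩
        · exact_mod_cast congrArg (fun n : ℕ => (n : ℤ)) h2.symm
        · exact absurd h2.symm hy2
    · intro hne
      have hne' : (gp w i).2 ≠ (gp w (i-1)).2 := by
        intro h; exact hne (by rw [h])
      rcases hs1 with ⟨h1, -⟩ | ⟨h1, -⟩
      · have hp : ¬ ((i-1) % 2 = 0) := fun h => hne' (hd1.2 h)
        have hip : i % 2 = 0 := by omega
        have hy2 : (gp w (i+1)).2 = (gp w i).2 := hd2.2 hip
        exact_mod_cast congrArg (fun n : ℕ => (n : ℤ)) hy2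
      · exact absurd h1.symm hne'
end

section
/- (Space-efficient zigzag folding of any number of atoms.) For every positive integer n, setting m = ⌈√n / 2⌉, there exists a zigzag folding of n points into the (2m+2) × (2m+2) grid, i.e., an injective map f from {0, …, n−1} into {0, …, 2m+1} × {0, …, 2m+1} such that consecutive images are at L1 distance 1 and consecutive steps alternate between horizontal and vertical. -/
/-- The zigzag path: strip `i / (4m)` (rows `2s, 2s+1`), position `i % (4m)` within strip. -/
def zz (m i : ℕ) : ℕ × ℕ :=
  ((if (i / (4*m)) % 2 = 0 then (i % (4*m) + 1)/2 else 2*m - (i % (4*m) + 1)/2),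
   2*(i/(4*m)) + (i % (4*m)) % 4 / 2)

lemma zz_divmod (m q r : ℕ) (hm : 0 < m) (hr : r < 4*m) :
    (4*m*q + r) / (4*m) = q ∧ (4*m*q + r) % (4*m) = r := by
  constructor
  · rw [Nat.mul_add_div (by omega), Nat.div_eq_of_lt hr]; omega
  · rw [Nat.mul_add_mod]; exact Nat.mod_eq_of_lt hr

lemma zz_step (m : ℕ) (hm : 1 ≤ m) (i : ℕ) :
    (i % 2 = 0 ∧ (zz m (i+1)).2 = (zz m i).2 ∧
      ((zz m (i+1)).1 = (zz m i).1 + 1 ∨ (zz m i).1 = (zz m (i+1)).1 + 1)) ∨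
    (i % 2 = 1 ∧ (zz m (i+1)).1 = (zz m i).1 ∧
      ((zz m (i+1)).2 = (zz m i).2 + 1 ∨ (zz m i).2 = (zz m (i+1)).2 + 1)) := by
  obtain ⟨q, r, hr, hi⟩ : ∃ q r, r < 4*m ∧ i = 4*m*q + r :=
    ⟨i/(4*m), i%(4*m), Nat.mod_lt _ (by omega), (Nat.div_add_mod i (4*m)).symm⟩
  obtain ⟨k, hk⟩ : ∃ k, i = 2*k + r := ⟨2*m*q, by rw [hi]; ring⟩
  rcases Nat.lt_or_ge (r+1) (4*m) with h4 | h4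
  · have e1 := zz_divmod m q r (by omega) hr
    have e2 : (i+1) / (4*m) = q ∧ (i+1) % (4*m) = r+1 := by
      have h : i + 1 = 4*m*q + (r+1) := by omega
      rw [h]; exact zz_divmod m q (r+1) (by omega) h4
    rw [← hi] at e1
    simp only [zz, e1.1, e1.2, e2.1, e2.2]
    rcases Nat.mod_two_eq_zero_or_one q with h | h <;> simp only [h] <;> simp <;> omega
  · have h4' : r + 1 = 4*m := by omega
    have e1 := zz_divmod m q r (by omega) hr
    have e2 : (i+1) / (4*m) = q+1 ∧ (i+1) % (4*m) = 0 := by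
      have h : i + 1 = 4*m*(q+1) + 0 := by rw [hi, ← h4']; ring
      rw [h]; exact zz_divmod m (q+1) 0 (by omega) (by omega)
    rw [← hi] at e1
    simp only [zz, e1.1, e1.2, e2.1, e2.2]
    rcases Nat.mod_two_eq_zero_or_one q with h | h
    · have h' : (q+1) % 2 = 1 := by omega
      simp only [h, h']; simp <;> omega
    · have h' : (q+1) % 2 = 0 := by omega
      simp only [h, h']; simp <;> omega

lemma zz_inj (m : ℕ) (hm : 1 ≤ m) {i j : ℕ} (h : zz m i = zz m j) : i = j := by
  obtain ⟨qi, ri, hri, hi⟩ : ∃ q r, r < 4*m ∧ i = 4*m*q + r :=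
    ⟨i/(4*m), i%(4*m), Nat.mod_lt _ (by omega), (Nat.div_add_mod i (4*m)).symm⟩
  obtain ⟨qj, rj, hrj, hj⟩ : ∃ q r, r < 4*m ∧ j = 4*m*q + r :=
    ⟨j/(4*m), j%(4*m), Nat.mod_lt _ (by omega), (Nat.div_add_mod j (4*m)).symm⟩
  have ei := zz_divmod m qi ri (by omega) hri
  have ej := zz_divmod m qj rj (by omega) hrj
  rw [hi, hj] at h
  simp only [zz, ei.1, ei.2, ej.1, ej.2, Prod.mk.injEq] at h
  obtain ⟨hx, hy⟩ := h
  have hq : qi = qj := by omega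
  subst hq
  rcases Nat.mod_two_eq_zero_or_one qi with hp | hp <;> simp only [hp] at hx <;> simp at hx <;>
    (have : ri = rj := by omega
     rw [hi, hj, this])

/-- Space-efficient zigzag folding of any number of atoms: for every positive
integer `n`, with `m = ⌈√n / 2⌉`, there exists a zigzag folding of `n` points
into the `(2m+2) × (2m+2)` grid, i.e. an injective map `f` on `{0, …, n-1}` into
`{0, …, 2m+1} × {0, …, 2m+1}` such that consecutive images are at L1 distance 1
and consecutive steps alternate between horizontal and vertical. -/
theorem stmt14 (n : ℕ) (hn : 0 < n) (m : ℕ) (hm : m = ⌈Real.sqrt n / 2⌉₊) :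
    ∃ f : ℕ → ℤ × ℤ,
      Set.InjOn f (Set.Iio n) ∧
      (∀ i < n,
        0 ≤ (f i).1 ∧ (f i).1 ≤ 2 * m + 1 ∧ 0 ≤ (f i).2 ∧ (f i).2 ≤ 2 * m + 1) ∧
      (∀ i, i + 1 < n →
        |(f (i + 1)).1 - (f i).1| + |(f (i + 1)).2 - (f i).2| = 1) ∧
      (∀ i, 0 < i → i + 1 < n →
        (((f i).1 ≠ (f (i - 1)).1 → (f (i + 1)).1 = (f i).1) ∧
         ((f i).2 ≠ (f (i - 1)).2 → (f (i + 1)).2 = (f i).2))) := by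
  have hm1 : 1 ≤ m := by
    rw [hm]
    refine Nat.one_le_ceil_iff.mpr ?_
    have : (0:ℝ) < Real.sqrt n := Real.sqrt_pos.mpr (by exact_mod_cast hn)
    linarith
  have hsq : Real.sqrt n ≤ 2 * m := by
    have h1 : Real.sqrt n / 2 ≤ (m : ℝ) := by rw [hm]; exact Nat.le_ceil _
    linarith
  have hn4 : n ≤ 4 * m * m := by
    have h2 : (n : ℝ) ≤ (2*m) * (2*m) := by
      nlinarith [Real.sq_sqrt (show (0:ℝ) ≤ n by positivity), Real.sqrt_nonneg (n:ℝ)]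
    have h3 : (n : ℝ) ≤ ((4 * m * m : ℕ) : ℝ) := by push_cast; linarith
    exact_mod_cast h3
  refine ⟨fun i => (((zz m i).1 : ℤ), ((zz m i).2 : ℤ)), ?_, ?_, ?_, ?_⟩
  · intro i _ j _ h
    simp only [Prod.mk.injEq, Nat.cast_inj] at h
    exact zz_inj m hm1 (Prod.ext h.1 h.2)
  · intro i hi
    have hs : i / (4*m) < m := by
      rw [Nat.div_lt_iff_lt_mul (by omega)]
      nlinarith
    have hr : i % (4*m) < 4*m := Nat.mod_lt _ (by omega)
    have hx : (zz m i).1 ≤ 2*m ∧ (zz m i).2 ≤ 2*m + 1 := by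
      simp only [zz]
      constructor
      · split <;> omega
      · omega
    refine ⟨?_, ?_, ?_, ?_⟩
    · show (0:ℤ) ≤ ((zz m i).1 : ℤ); positivity
    · show ((zz m i).1 : ℤ) ≤ 2*m+1; exact_mod_cast le_trans hx.1 (by omega)
    · show (0:ℤ) ≤ ((zz m i).2 : ℤ); positivity
    · show ((zz m i).2 : ℤ) ≤ 2*m+1; exact_mod_cast hx.2
  · intro i _
    rcases zz_step m hm1 i with ⟨_, h2, h3 | h3⟩ | ⟨_, h2, h3 | h3⟩ <;>
      simp only [h2, h3] <;> push_cast <;> simp [abs_sub_comm] <;> omega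
  · intro i hi0 _
    rcases i with _ | k
    · omega
    simp only [Nat.add_sub_cancel]
    constructor
    · intro hne
      have hk : k % 2 = 0 := by
        rcases zz_step m hm1 k with ⟨h, _, _⟩ | ⟨_, h2, _⟩
        · exact h
        · exact absurd (by rw [h2]) hne
      rcases zz_step m hm1 (k+1) with ⟨h, _, _⟩ | ⟨_, h2, _⟩
      · omega
      · rw [h2]
    · intro hne
      have hk : k % 2 = 1 := by
        rcases zz_step m hm1 k with ⟨_, h2, _⟩ | ⟨h, _, _⟩
        · exact absurd (by rw [h2]) hne
        · exact h
      rcases zz_step m hm1 (k+1) with ⟨_, h2, _⟩ | ⟨h, _, _⟩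
      · rw [h2]
      · omega
end
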